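/- Let K/k be a finite separable field extension and A a finite-dimensional k-algebra. Then every finitely generated left A-module X is a direct summand of F(X ⊗_k K) (the restriction of scalars of its scalar extension), and every finitely generated left (A ⊗_k K)-module Y is a direct summand of F(Y) ⊗_k K. -/

import Mathlib

open TensorProduct CategoryTheory

noncomputable section

set_option maxHeartbeats 1000000

namespace PaperFE

variable {k K : Type} [Field k] [Field K] [Algebra k K]
variable {A : Type} [Ring A] [Algebra k A]

/-- The right multiplication action of `K` on `M ⊗[k] K`, as a ring homomorphism
to `k`-linear endomorphisms. -/
def rightSmulHom (M : Type) [AddCommGroup M] [Module k M] :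
    K →+* Module.End k (TensorProduct k M K) where
  toFun l := LinearMap.lTensor M (Algebra.lmul k K l)
  map_one' := by ext x y; simp
  map_mul' l m := by ext x y; simp [Module.End.mul_eq_comp, mul_assoc]
  map_zero' := by ext x y; simp
  map_add' l m := by ext x y; simp [mul_add, add_mul, tmul_add]

/-- `M ⊗[k] K` is a `K`-module via right multiplication. -/
instance modK (M : Type) [AddCommGroup M] [Module k M] :
    Module K (TensorProduct k M K) :=
  Module.compHom _ (rightSmulHom (k := k) (K := K) M)

lemma modK_smul_tmul {M : Type} [AddCommGroup M] [Module k M]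
    (l : K) (m : M) (x : K) :
    l • (m ⊗ₜ[k] x) = m ⊗ₜ[k] (l * x) := rfl

instance modK_smulCommClass (M : Type) [AddCommGroup M] [Module k M] :
    SMulCommClass k K (TensorProduct k M K) := by
  constructor
  intro c l x
  show c • ((rightSmulHom (k := k) (K := K) M l) x) = (rightSmulHom (k := k) (K := K) M l) (c • x)
  rw [LinearMap.map_smul]

instance modK_tower (M : Type) [AddCommGroup M] [Module k M] :
    IsScalarTower k K (TensorProduct k M K) := by
  constructor
  intro c l x
  show ((rightSmulHom (k := k) (K := K) M) (c • l)) x = c • ((rightSmulHom (k := k) (K := K) M) l) x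
  have : (c • l : K) = (algebraMap k K c) * l := by rw [Algebra.smul_def]
  rw [this, map_mul]
  induction x using TensorProduct.induction_on with
  | zero => simp
  | tmul m y =>
      show m ⊗ₜ[k] (algebraMap k K c * (l * y)) = c • (m ⊗ₜ[k] (l * y))
      rw [← Algebra.smul_def, tmul_smul]
  | add x y hx hy => simp only [map_add, smul_add, hx, hy]

instance modK_smulCommClassA (M : Type) [AddCommGroup M] [Module k M]
    [Module A M] [IsScalarTower k A M] :
    SMulCommClass A K (TensorProduct k M K) := by
  constructor
  intro a l x
  show a • ((rightSmulHom (k := k) (K := K) M l) x) = (rightSmulHom (k := k) (K := K) M l) (a • x)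
  induction x using TensorProduct.induction_on with
  | zero => simp
  | tmul m y =>
      show a • (m ⊗ₜ[k] (l * y)) = (rightSmulHom (k := k) (K := K) M l) (a • (m ⊗ₜ[k] y))
      rw [smul_tmul', smul_tmul']
      rfl
  | add x y hx hy => simp only [map_add, smul_add, hx, hy]

/-- The `A ⊗[k] K`-module structure on `M ⊗[k] K` for an `A`-module `M`. -/
instance extModule (M : Type) [AddCommGroup M] [Module k M]
    [Module A M] [IsScalarTower k A M] :
    Module (A ⊗[k] K) (TensorProduct k M K) :=
  TensorProduct.Algebra.module (R := k) (A := A) (B := K) (M := TensorProduct k M K)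

lemma extModule_tmul_smul {M : Type} [AddCommGroup M] [Module k M]
    [Module A M] [IsScalarTower k A M]
    (a : A) (l : K) (m : M) (y : K) :
    (a ⊗ₜ[k] l : A ⊗[k] K) • (m ⊗ₜ[k] y : TensorProduct k M K) = (a • m) ⊗ₜ[k] (l * y) := by
  rw [TensorProduct.Algebra.smul_def, modK_smul_tmul, smul_tmul']

section Functor

open ModuleCat

variable (k K A) in
/-- The scalar extension of an `A`-module, as a module over `A ⊗[k] K`. -/
def tensObj (M : ModuleCat A) : ModuleCat (A ⊗[k] K) :=
  ModuleCat.of (A ⊗[k] K) (TensorProduct k M K)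

variable (k K A) in
/-- The scalar extension functor `Mod A ⥤ Mod (A ⊗[k] K)`. -/
def tensUp : ModuleCat A ⥤ ModuleCat (A ⊗[k] K) where
  obj M := tensObj k K A M
  map {M N} f := ModuleCat.ofHom
    { toFun := LinearMap.rTensor K (LinearMap.restrictScalars k f.hom)
      map_add' := by intro x y; exact map_add _ x y
      map_smul' := by
        intro r x
        dsimp only [RingHom.id_apply]
        induction r using TensorProduct.induction_on with
        | zero => rw [zero_smul, zero_smul, map_zero]
        | add r s hr hs => rw [add_smul, add_smul, map_add, hr, hs]
        | tmul a l =>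
          induction x using TensorProduct.induction_on with
          | zero => rw [smul_zero, map_zero, smul_zero]
          | add x y hx hy => rw [smul_add, map_add, map_add, smul_add, hx, hy]
          | tmul m y =>
              rw [extModule_tmul_smul]
              rw [LinearMap.rTensor_tmul, LinearMap.rTensor_tmul]
              rw [extModule_tmul_smul]
              rw [LinearMap.restrictScalars_apply, LinearMap.restrictScalars_apply, map_smul] }
  map_id M := by
    apply ModuleCat.hom_ext
    apply LinearMap.ext
    intro x
    show LinearMap.rTensor K (LinearMap.restrictScalars k (LinearMap.id)) x = x
    induction x using TensorProduct.induction_on with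
    | zero => rw [map_zero]
    | tmul m y => rfl
    | add x y hx hy => rw [map_add, hx, hy]
  map_comp {M N P} f g := by
    apply ModuleCat.hom_ext
    apply LinearMap.ext
    intro x
    induction x using TensorProduct.induction_on with
    | zero => simp only [map_zero]
    | tmul m y => rfl
    | add x y hx hy =>
      simp only [map_add] at hx hy ⊢
      rw [hx, hy]

instance : (tensUp k K A).Additive where
  map_add := by
    intro M N f g
    apply ModuleCat.hom_ext
    apply LinearMap.ext
    intro x
    show LinearMap.rTensor K (LinearMap.restrictScalars k (f + g).hom) x =
      LinearMap.rTensor K (LinearMap.restrictScalars k f.hom) x +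
        LinearMap.rTensor K (LinearMap.restrictScalars k g.hom) x
    induction x using TensorProduct.induction_on with
    | zero => simp only [map_zero, add_zero]
    | tmul m y =>
      rw [LinearMap.rTensor_tmul, LinearMap.rTensor_tmul, LinearMap.rTensor_tmul]
      show (f.hom m + g.hom m) ⊗ₜ[k] y = (f.hom m) ⊗ₜ[k] y + (g.hom m) ⊗ₜ[k] y
      rw [add_tmul]
    | add x y hx hy =>
      rw [map_add, map_add, map_add, hx, hy]
      abel

variable (k K A) in
/-- Restriction of scalars along `A → A ⊗[k] K`. -/
def resDown : ModuleCat (A ⊗[k] K) ⥤ ModuleCat A :=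
  ModuleCat.restrictScalars (Algebra.TensorProduct.includeLeftRingHom (R := k) (A := A) (B := K))

instance : (resDown k K A).Additive where
  map_add := ModuleCat.hom_ext (LinearMap.ext fun _ => rfl)

end Functor


section Aux

open ModuleCat

variable [FiniteDimensional k K] [Algebra.IsSeparable k K]

variable (k K) in
private def bB : Module.Basis (Fin (Module.finrank k K)) k K := Module.finBasis k K

variable (k K) in
private def cB : Module.Basis (Fin (Module.finrank k K)) k K :=
  (Algebra.traceForm k K).dualBasis (_root_.traceForm_nondegenerate k K) (bB k K)

private lemma cB_repr (y : K) (i : Fin (Module.finrank k K)) :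
    (cB k K).repr y i = Algebra.trace k K (y * bB k K i) := by
  rw [cB, LinearMap.BilinForm.dualBasis_repr_apply, Algebra.traceForm_apply]

private lemma dual_dual :
    (Algebra.traceForm k K).dualBasis (_root_.traceForm_nondegenerate k K) (cB k K) = bB k K := by
  rw [cB]
  exact (Algebra.traceForm k K).dualBasis_dualBasis _ (Algebra.traceForm_isSymm k) _

private lemma bB_repr (y : K) (i : Fin (Module.finrank k K)) :
    (bB k K).repr y i = Algebra.trace k K (y * cB k K i) := by
  conv_lhs => rw [← dual_dual (k := k) (K := K)]
  rw [LinearMap.BilinForm.dualBasis_repr_apply, Algebra.traceForm_apply]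

private lemma expand_c (y : K) :
    ∑ i, Algebra.trace k K (y * bB k K i) • cB k K i = y := by
  conv_rhs => rw [← (cB k K).sum_repr y]
  exact Finset.sum_congr rfl fun i _ => by rw [cB_repr]

private lemma expand_b (y : K) :
    ∑ i, Algebra.trace k K (y * cB k K i) • bB k K i = y := by
  conv_rhs => rw [← (bB k K).sum_repr y]
  exact Finset.sum_congr rfl fun i _ => by rw [bB_repr]

variable (k K) in
private lemma sum_cb : ∑ i, cB k K i * bB k K i = 1 := by
  classical
  have key : ∀ x : K, Algebra.trace k K (x * ∑ i, cB k K i * bB k K i) = Algebra.trace k K x := by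
    intro x
    rw [Finset.mul_sum, map_sum, Algebra.trace_eq_matrix_trace (cB k K) x, Matrix.trace]
    refine Finset.sum_congr rfl fun i _ => ?_
    rw [Matrix.diag_apply, Algebra.leftMulMatrix_eq_repr_mul, cB_repr, mul_assoc]
  have h2 : ∀ y : K, (Algebra.traceForm k K) ((∑ i, cB k K i * bB k K i) - 1) y = 0 := by
    intro y
    rw [map_sub, LinearMap.sub_apply, Algebra.traceForm_apply, Algebra.traceForm_apply, one_mul,
      mul_comm _ y, key y, sub_self]
  have h3 := (_root_.traceForm_nondegenerate k K).1 _ h2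
  exact sub_eq_zero.mp h3

variable (k) in
private def projBil (X : ModuleCat A) (f : K →ₗ[k] k) :
    ↑X →ₗ[k] K →ₗ[k] ↑X where
  toFun x :=
    { toFun := fun l => f l • x
      map_add' := fun l l' => by
        show f (l + l') • x = f l • x + f l' • x
        rw [map_add, add_smul]
      map_smul' := fun c l => by
        show f (c • l) • x = c • (f l • x)
        rw [map_smul, smul_assoc] }
  map_add' x x' := by ext l; exact smul_add _ _ _
  map_smul' c x := by
    ext l
    show f l • (c • x) = c • (f l • x)
    rw [smul_smul, smul_smul, mul_comm]

variable (k) in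
private lemma part1 (X : ModuleCat A) :
    ∃ (i : X ⟶ (resDown k K A).obj ((tensUp k K A).obj X))
      (r : (resDown k K A).obj ((tensUp k K A).obj X) ⟶ X), i ≫ r = 𝟙 X := by
  obtain ⟨u, hu⟩ := DFunLike.ne_iff.mp (Algebra.trace_ne_zero k K)
  rw [LinearMap.zero_apply] at hu
  set f : K →ₗ[k] k := (Algebra.trace k K u)⁻¹ • (Algebra.traceForm k K u) with hfdef
  have hf1 : f 1 = 1 := by
    rw [hfdef]
    simp only [LinearMap.smul_apply, Algebra.traceForm_apply, mul_one, smul_eq_mul]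
    exact inv_mul_cancel₀ hu
  refine ⟨ModuleCat.ofHom (Y := ↑((resDown k K A).obj ((tensUp k K A).obj X)))
          { toFun := fun x => (x ⊗ₜ[k] (1 : K) : TensorProduct k (↑X) K)
            map_add' := fun x y => add_tmul x y 1
            map_smul' := fun a x => ?_ },
          ModuleCat.ofHom (X := ↑((resDown k K A).obj ((tensUp k K A).obj X)))
          { toFun := TensorProduct.lift (projBil k X f)
            map_add' := fun s t => map_add _ s t
            map_smul' := fun a (t : TensorProduct k (↑X) K) => ?_ }, ?_⟩
  · show (a • x) ⊗ₜ[k] (1 : K) = (a ⊗ₜ[k] (1 : K) : A ⊗[k] K) • (x ⊗ₜ[k] (1 : K))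
    rw [extModule_tmul_smul, mul_one]
  · show TensorProduct.lift (projBil k X f) ((a ⊗ₜ[k] (1 : K) : A ⊗[k] K) • t) =
      a • TensorProduct.lift (projBil k X f) t
    induction t using TensorProduct.induction_on with
    | zero => rw [smul_zero, map_zero, smul_zero]
    | add s t hs ht => rw [smul_add, map_add, map_add, hs, ht, smul_add]
    | tmul x y =>
        show TensorProduct.lift (projBil k X f) ((a ⊗ₜ[k] (1 : K) : A ⊗[k] K) • (x ⊗ₜ[k] y)) =
          a • TensorProduct.lift (projBil k X f) (x ⊗ₜ[k] y)
        rw [extModule_tmul_smul, one_mul, TensorProduct.lift.tmul, TensorProduct.lift.tmul]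
        show f y • (a • x) = a • (f y • x)
        exact smul_comm _ _ _
  · refine ModuleCat.hom_ext (LinearMap.ext fun x => ?_)
    show TensorProduct.lift (projBil k X f) (x ⊗ₜ[k] (1 : K)) = x
    rw [TensorProduct.lift.tmul]
    show f 1 • x = x
    rw [hf1, one_smul]

private instance instModFY (Y : ModuleCat (A ⊗[k] K)) :
    Module (A ⊗[k] K) ↑((resDown k K A).obj Y) :=
  inferInstanceAs (Module (A ⊗[k] K) ↑Y)

private instance instModAY (Y : ModuleCat (A ⊗[k] K)) : Module A ↑Y :=
  inferInstanceAs (Module A ↑((resDown k K A).obj Y))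

private instance instTowerY (Y : ModuleCat (A ⊗[k] K)) : IsScalarTower k A ↑Y :=
  ⟨fun c a y => by
    show ((c • a) ⊗ₜ[k] (1 : K) : A ⊗[k] K) • y =
      algebraMap k (A ⊗[k] K) c • ((a ⊗ₜ[k] (1 : K) : A ⊗[k] K) • y)
    rw [Algebra.smul_def c a, Algebra.TensorProduct.algebraMap_apply, smul_smul,
      Algebra.TensorProduct.tmul_mul_tmul, mul_one]⟩

variable (k) in
private def epsBil (Y : ModuleCat (A ⊗[k] K)) :
    ↑Y →ₗ[k] K →ₗ[k] ↑Y where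
  toFun y :=
    { toFun := fun l => (((1 : A) ⊗ₜ[k] l : A ⊗[k] K) • y : ↑Y)
      map_add' := fun l l' => by
        show (((1 : A) ⊗ₜ[k] (l + l') : A ⊗[k] K) • y : ↑Y) = _
        rw [tmul_add, add_smul]
      map_smul' := fun c l => by
        show (((1 : A) ⊗ₜ[k] (c • l) : A ⊗[k] K) • y : ↑Y) =
          algebraMap k (A ⊗[k] K) c • ((((1 : A) ⊗ₜ[k] l : A ⊗[k] K) : A ⊗[k] K) • y : ↑Y)
        rw [tmul_smul, Algebra.smul_def, mul_smul] }
  map_add' y y' := by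
    ext l
    show (((1 : A) ⊗ₜ[k] l : A ⊗[k] K) • (y + y') : ↑Y) = _
    rw [smul_add]
    rfl
  map_smul' c y := by
    ext l
    show (((1 : A) ⊗ₜ[k] l : A ⊗[k] K) •
        ((algebraMap k A c ⊗ₜ[k] (1 : K) : A ⊗[k] K) • y) : ↑Y) =
      (algebraMap k (A ⊗[k] K) c) • ((((1 : A) ⊗ₜ[k] l : A ⊗[k] K) • y : ↑Y))
    rw [smul_smul, smul_smul, Algebra.TensorProduct.algebraMap_apply,
      Algebra.TensorProduct.tmul_mul_tmul, Algebra.TensorProduct.tmul_mul_tmul,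
      one_mul, mul_one, one_mul, mul_one]

variable (k) in
private def iAdd (Y : ModuleCat (A ⊗[k] K)) :
    ↑Y →+ TensorProduct k ↑Y K where
  toFun y := ∑ i, ((((1 : A) ⊗ₜ[k] cB k K i : A ⊗[k] K) • y :
      ↑((resDown k K A).obj Y)) ⊗ₜ[k] bB k K i)
  map_zero' := by
    refine Finset.sum_eq_zero fun i _ => ?_
    rw [smul_zero]
    exact zero_tmul _ _
  map_add' y y' := by
    show (∑ i, ((((1 : A) ⊗ₜ[k] cB k K i : A ⊗[k] K) • (y + y') :
        ↑((resDown k K A).obj Y)) ⊗ₜ[k] bB k K i)) = _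
    refine Eq.trans ?_ Finset.sum_add_distrib
    exact Finset.sum_congr rfl fun i _ => by rw [smul_add, add_tmul]

private lemma iAdd_apply (Y : ModuleCat (A ⊗[k] K)) (y : ↑Y) :
    iAdd k Y y = ∑ i, ((((1 : A) ⊗ₜ[k] cB k K i : A ⊗[k] K) • y :
      ↑((resDown k K A).obj Y)) ⊗ₜ[k] bB k K i) := rfl

variable (k) in
private lemma part2 (Y : ModuleCat (A ⊗[k] K)) :
    ∃ (i : Y ⟶ (tensUp k K A).obj ((resDown k K A).obj Y))
      (r : (tensUp k K A).obj ((resDown k K A).obj Y) ⟶ Y), i ≫ r = 𝟙 Y := by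
  classical
  letI iM : Module (A ⊗[k] K) (TensorProduct k ↑Y K) := extModule (k := k) (K := K) (A := A) ↑Y
  letI : SMul (A ⊗[k] K) (TensorProduct k ↑Y K) := iM.toSMul
  have hbrY : ∀ (t : k) (w : ↑((resDown k K A).obj Y)),
      (algebraMap k (A ⊗[k] K) t) • w = t • w := fun t w => rfl
  have haFY : ∀ (a : A) (w : ↑((resDown k K A).obj Y)),
      (a • w : ↑((resDown k K A).obj Y)) = (a ⊗ₜ[k] (1 : K) : A ⊗[k] K) • w := fun a w => rfl
  refine ⟨ModuleCat.ofHom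
          { toFun := iAdd k Y
            map_add' := (iAdd k Y).map_add
            map_smul' := fun r y => ?_ },
          ModuleCat.ofHom
          { toFun := TensorProduct.lift (epsBil k Y)
            map_add' := fun s t => map_add _ s t
            map_smul' := fun r (t : TensorProduct k ↑Y K) => ?_ }, ?_⟩
  · rw [RingHom.id_apply]
    show iAdd k Y (r • y) = r • iAdd k Y y
    induction r using TensorProduct.induction_on with
    | zero => rw [zero_smul, zero_smul, (iAdd k Y).map_zero]
    | add r s hr hs => rw [add_smul, (iAdd k Y).map_add, hr, hs, add_smul]
    | tmul a l =>
      calc iAdd k Y ((a ⊗ₜ[k] l) • y)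
          = ∑ i, (((a ⊗ₜ[k] (cB k K i * l) : A ⊗[k] K) • y :
              ↑((resDown k K A).obj Y)) ⊗ₜ[k] bB k K i) := by
            rw [iAdd_apply]
            refine Finset.sum_congr rfl fun i _ => ?_
            rw [smul_smul, Algebra.TensorProduct.tmul_mul_tmul, one_mul]
        _ = ∑ i, ∑ j, Algebra.trace k K (cB k K i * l * bB k K j) •
              ((((a ⊗ₜ[k] cB k K j : A ⊗[k] K) • y :
                ↑((resDown k K A).obj Y))) ⊗ₜ[k] bB k K i) := by
            refine Finset.sum_congr rfl fun i _ => ?_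
            conv_lhs => rw [← expand_c (k := k) (cB k K i * l), tmul_sum, Finset.sum_smul, sum_tmul]
            refine Finset.sum_congr rfl fun j _ => ?_
            rw [tmul_smul, Algebra.smul_def, mul_smul]
            erw [hbrY]
            rw [smul_tmul']
            rfl
        _ = ∑ i, ∑ j, Algebra.trace k K (l * bB k K j * cB k K i) •
              ((((a ⊗ₜ[k] cB k K j : A ⊗[k] K) • y :
                ↑((resDown k K A).obj Y))) ⊗ₜ[k] bB k K i) := by
            refine Finset.sum_congr rfl fun i _ => Finset.sum_congr rfl fun j _ => ?_
            rw [show cB k K i * l * bB k K j = l * bB k K j * cB k K i by ring]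
        _ = ∑ j, ∑ i, Algebra.trace k K (l * bB k K j * cB k K i) •
              ((((a ⊗ₜ[k] cB k K j : A ⊗[k] K) • y :
                ↑((resDown k K A).obj Y))) ⊗ₜ[k] bB k K i) := by
            rw [Finset.sum_comm]
        _ = ∑ j, ((((a ⊗ₜ[k] cB k K j : A ⊗[k] K) • y :
              ↑((resDown k K A).obj Y))) ⊗ₜ[k] (l * bB k K j)) := by
            refine Finset.sum_congr rfl fun j _ => ?_
            conv_rhs => rw [← expand_b (k := k) (l * bB k K j), tmul_sum]
            exact Finset.sum_congr rfl fun i _ => by rw [tmul_smul]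
        _ = (a ⊗ₜ[k] l) • iAdd k Y y := by
            rw [iAdd_apply]
            refine Eq.trans ?_ (map_sum (AddMonoidHom.mk' (fun x : TensorProduct k ↑Y K =>
              (a ⊗ₜ[k] l : A ⊗[k] K) • x) (iM.toDistribMulAction.smul_add _)) _ _).symm
            refine Finset.sum_congr rfl fun j _ => ?_
            show _ = (a ⊗ₜ[k] l : A ⊗[k] K) •
              ((((1 : A) ⊗ₜ[k] cB k K j : A ⊗[k] K) • y : ↑Y) ⊗ₜ[k] bB k K j)
            erw [extModule_tmul_smul]
            have e3 : (a • (((1 : A) ⊗ₜ[k] cB k K j : A ⊗[k] K) • y) : ↑Y) =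
                ((a ⊗ₜ[k] cB k K j : A ⊗[k] K) • y : ↑Y) := by
              show ((a ⊗ₜ[k] (1 : K) : A ⊗[k] K) •
                (((1 : A) ⊗ₜ[k] cB k K j : A ⊗[k] K) • y) : ↑Y) = _
              rw [smul_smul, Algebra.TensorProduct.tmul_mul_tmul, mul_one, one_mul]
            rw [e3]
  · rw [RingHom.id_apply]
    show TensorProduct.lift (epsBil k Y) (r • t) = r • TensorProduct.lift (epsBil k Y) t
    induction r using TensorProduct.induction_on with
    | zero => rw [zero_smul, map_zero, zero_smul]
    | add r s hr hs => rw [add_smul, map_add, hr, hs, add_smul]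
    | tmul a l =>
      induction t using TensorProduct.induction_on with
      | zero => erw [smul_zero, map_zero]
      | add u v hu hv =>
        have e : ((a ⊗ₜ[k] l : A ⊗[k] K) • (u + v) : TensorProduct k ↑Y K) =
            (a ⊗ₜ[k] l : A ⊗[k] K) • u + (a ⊗ₜ[k] l : A ⊗[k] K) • v :=
          iM.toDistribMulAction.smul_add _ _ _
        rw [e, map_add, map_add, smul_add, hu, hv]
      | tmul w x =>
        erw [extModule_tmul_smul]
        rw [TensorProduct.lift.tmul, TensorProduct.lift.tmul]
        show (((1 : A) ⊗ₜ[k] (l * x) : A ⊗[k] K) •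
            ((a ⊗ₜ[k] (1 : K) : A ⊗[k] K) • w) : ↑Y) =
          (a ⊗ₜ[k] l) • ((((1 : A) ⊗ₜ[k] x : A ⊗[k] K) • w : ↑Y))
        rw [smul_smul, smul_smul, Algebra.TensorProduct.tmul_mul_tmul,
          Algebra.TensorProduct.tmul_mul_tmul]
        simp only [one_mul, mul_one]
  · refine ModuleCat.hom_ext (LinearMap.ext fun y => ?_)
    show TensorProduct.lift (epsBil k Y) (iAdd k Y y) = y
    rw [iAdd_apply, map_sum]
    have h1 : ∀ i, TensorProduct.lift (epsBil k Y)
        ((((1 : A) ⊗ₜ[k] cB k K i : A ⊗[k] K) • y :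
          ↑((resDown k K A).obj Y)) ⊗ₜ[k] bB k K i)
        = (((1 : A) ⊗ₜ[k] (cB k K i * bB k K i) : A ⊗[k] K) • y : ↑Y) := by
      intro i
      rw [TensorProduct.lift.tmul]
      show (((1 : A) ⊗ₜ[k] bB k K i : A ⊗[k] K) •
        (((1 : A) ⊗ₜ[k] cB k K i : A ⊗[k] K) • y) : ↑Y) = _
      rw [smul_smul, Algebra.TensorProduct.tmul_mul_tmul, one_mul, mul_comm (bB k K i)]
    rw [Finset.sum_congr rfl fun i _ => h1 i, ← Finset.sum_smul, ← tmul_sum, sum_cb k K,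
      ← Algebra.TensorProduct.one_def, one_smul]

end Aux

variable (k K A) in
/-- over a finite separable field extension, every finitely generated
`A`-module is a direct summand of the restriction of its scalar extension, and every
finitely generated `A ⊗[k] K`-module is a direct summand of the scalar extension of
its restriction. -/
theorem stmt0 [FiniteDimensional k K] [Algebra.IsSeparable k K] [FiniteDimensional k A] :
    (∀ X : ModuleCat A, Module.Finite A X →
      ∃ (i : X ⟶ (resDown k K A).obj ((tensUp k K A).obj X))
        (r : (resDown k K A).obj ((tensUp k K A).obj X) ⟶ X), i ≫ r = 𝟙 X) ∧
    (∀ Y : ModuleCat (A ⊗[k] K), Module.Finite (A ⊗[k] K) Y →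
      ∃ (i : Y ⟶ (tensUp k K A).obj ((resDown k K A).obj Y))
        (r : (tensUp k K A).obj ((resDown k K A).obj Y) ⟶ Y), i ≫ r = 𝟙 Y) :=
  ⟨fun X _ => part1 k X, fun Y _ => part2 k Y⟩

end PaperFE
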